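/- arXiv:2204.04543 — 6 statements merged into one kernel-verified Lean document; each statement's English description precedes it below -/
import Mathlib

section
/- Let u be a nontrivial element of a free group F that is not a proper power. If there exist w ∈ F and integers p, q with w⁻¹ u^p w = u^q and p ≠ 0, then p = q and w lies in the cyclic subgroup generated by u. -/
open List

namespace CPF

variable {α : Type*} [DecidableEq α]

def Rel : (α × Bool) → (α × Bool) → Prop := fun a b => b ≠ (a.1, !a.2)

lemma rel_iff_not (x y : α × Bool) : ¬ Rel x y ↔ (x.1 = y.1 ∧ x.2 = !y.2) := by
  constructor
  · intro h
    have : y = (x.1, !x.2) := not_not.mp h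
    subst this
    exact ⟨rfl, by simp⟩
  · rintro ⟨h1, h2⟩ hr
    exact hr (by ext <;> simp [h1.symm, h2, Bool.not_not])

lemma reduce_eq_self_of_chain' {L : List (α × Bool)} (h : List.Chain' Rel L) :
    FreeGroup.reduce L = L := by
  induction L with
  | nil => rfl
  | cons x L ih =>
    have hL : FreeGroup.reduce L = L := ih h.tail
    rw [FreeGroup.reduce.cons, hL]
    cases L with
    | nil => rfl
    | cons y t =>
      have hxy : Rel x y := (List.isChain_cons_cons.mp h).1
      exact if_neg (fun hc => ((rel_iff_not x y).mpr hc) hxy)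

lemma chain'_of_reduce_eq_self {L : List (α × Bool)} (h : FreeGroup.reduce L = L) :
    List.Chain' Rel L := by
  induction L with
  | nil => exact List.isChain_nil
  | cons x L ih =>
    rw [FreeGroup.reduce.cons] at h
    rcases hr : FreeGroup.reduce L with _ | ⟨y, t⟩
    · rw [hr] at h
      have h : [x] = x :: L := h
      have : L = [] := by simpa using congrArg List.tail h
      subst this
      exact List.isChain_singleton x
    · rw [hr] at h
      have h : (if x.1 = y.1 ∧ x.2 = !y.2 then t else x :: y :: t) = x :: L := h
      by_cases hc : x.1 = y.1 ∧ x.2 = !y.2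
      · rw [if_pos hc] at h
        exfalso
        have h1 : t.length = L.length + 1 := by
          have := congrArg List.length h
          simpa using this
        have h2 : (FreeGroup.reduce L).length ≤ L.length :=
          (FreeGroup.Red.length_le (FreeGroup.reduce.red))
        rw [hr] at h2
        simp at h2
        omega
      · rw [if_neg hc] at h
        have hLyt : L = y :: t := by simpa using (congrArg List.tail h).symm
        subst hLyt
        refine List.isChain_cons_cons.mpr ⟨?_, ?_⟩
        · exact fun he => hc ((rel_iff_not x y).mp (not_not.mpr he))
        · exact ih hr

lemma reduce_eq_self_iff {L : List (α × Bool)} :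
    FreeGroup.reduce L = L ↔ List.Chain' Rel L :=
  ⟨chain'_of_reduce_eq_self, reduce_eq_self_of_chain'⟩


def CycRed (L : List (α × Bool)) : Prop := List.Chain' Rel (L ++ L)

lemma CycRed.chain' {L : List (α × Bool)} (h : CycRed L) : List.Chain' Rel L :=
  h.left_of_append

lemma chain'_flatten_replicate {L : List (α × Bool)} (h : CycRed L) (hL : L ≠ []) (n : ℕ) :
    List.Chain' Rel (List.flatten (List.replicate n L)) := by
  show List.IsChain Rel _
  rw [List.isChain_flatten (by intro hmem; exact hL (List.eq_of_mem_replicate hmem).symm)]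
  constructor
  · intro l hl; rw [List.eq_of_mem_replicate hl]; exact h.chain'
  · have hj : ∀ x ∈ L.getLast?, ∀ y ∈ L.head?, Rel x y := (List.isChain_append.1 h).2.2
    induction n with
    | zero => simp
    | succ n ihn =>
      rw [List.replicate_succ]
      cases n with
      | zero => simp
      | succ m =>
        rw [List.replicate_succ]
        exact List.isChain_cons_cons.mpr ⟨hj, by rw [← List.replicate_succ]; exact ihn⟩

lemma norm_mk_pow {L : List (α × Bool)} (h : CycRed L) (hL : L ≠ []) (n : ℕ) :
    FreeGroup.norm ((FreeGroup.mk L) ^ n) = n * L.length := by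
  rw [FreeGroup.pow_mk]
  have h1 : ((FreeGroup.mk (List.flatten (List.replicate n L)))).toWord
      = List.flatten (List.replicate n L) := by
    rw [FreeGroup.toWord_mk]
    exact reduce_eq_self_of_chain' (chain'_flatten_replicate h hL n)
  rw [FreeGroup.norm, h1]
  simp [List.length_flatten, List.map_replicate, List.sum_replicate, smul_eq_mul, mul_comm]

lemma exists_decomp_aux (N : ℕ) : ∀ (g : FreeGroup α), FreeGroup.norm g = N → g ≠ 1 →
    ∃ (a : FreeGroup α) (L : List (α × Bool)), CycRed L ∧ L ≠ [] ∧
      g = a * FreeGroup.mk L * a⁻¹ := by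
  induction N using Nat.strong_induction_on with
  | _ N ih =>
  intro g hN hg
  subst hN
  have hMred : List.Chain' Rel g.toWord := chain'_of_reduce_eq_self (FreeGroup.reduce_toWord g)
  have hMne : g.toWord ≠ [] := fun hn => hg (FreeGroup.toWord_eq_nil_iff.mp hn)
  have hgM : g = FreeGroup.mk g.toWord := (FreeGroup.mk_toWord).symm
  by_cases hcr : CycRed g.toWord
  · exact ⟨1, g.toWord, hcr, hMne, by simpa using hgM⟩
  · have hjct : ¬ (∀ x ∈ g.toWord.getLast?, ∀ y ∈ g.toWord.head?, Rel x y) := by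
      intro hj
      exact hcr (List.isChain_append.2 ⟨hMred, hMred, hj⟩)
    push_neg at hjct
    obtain ⟨x, hxmem, y, hymem, hxy⟩ := hjct
    have hxval : x = (y.1, !y.2) := by
      obtain ⟨h1, h2⟩ := (rel_iff_not x y).mp hxy
      ext
      · exact h1
      · simpa using h2
    rw [Option.mem_def, List.getLast?_eq_some_iff] at hxmem
    obtain ⟨K, hK⟩ := hxmem
    rcases K with _ | ⟨y0, mid⟩
    · -- M = [x] : then y = x, but Rel x x always holds
      exfalso
      rw [hK] at hymem
      have hyx : y = x := by simpa [Option.mem_def] using hymem.symm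
      rw [hyx] at hxval
      have := congrArg Prod.snd hxval
      simp at this
    · obtain rfl : y0 = y := by
        rw [hK] at hymem
        simpa [Option.mem_def] using hymem
      -- g.toWord = y :: mid ++ [x]
      have hMdecomp : g.toWord = y0 :: (mid ++ [x]) := by simpa using hK
      have hmidne : mid ≠ [] := by
        intro hmn
        subst hmn
        rw [hMdecomp] at hMred
        simp only [List.nil_append] at hMred
        exact (List.isChain_cons_cons.mp hMred).1 hxval
      have hmidchain : List.Chain' Rel mid := by
        have h1 : List.Chain' Rel (y0 :: (mid ++ [x])) := hMdecomp ▸ hMred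
        exact (h1.tail).left_of_append
      have hmidword : (FreeGroup.mk mid).toWord = mid := by
        rw [FreeGroup.toWord_mk]
        exact reduce_eq_self_of_chain' hmidchain
      have hmidne1 : FreeGroup.mk mid ≠ 1 := by
        intro h1
        rw [h1] at hmidword
        exact hmidne (by simpa using hmidword.symm)
      have hnormlt : FreeGroup.norm (FreeGroup.mk mid) < FreeGroup.norm g := by
        rw [FreeGroup.norm, hmidword, FreeGroup.norm, hMdecomp]
        simp
      obtain ⟨b, L, hL1, hL2, hL3⟩ := ih _ hnormlt (FreeGroup.mk mid) rfl hmidne1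
      refine ⟨FreeGroup.mk [y0] * b, L, hL1, hL2, ?_⟩
      have hinv : FreeGroup.mk [x] = (FreeGroup.mk [y0])⁻¹ := by
        rw [FreeGroup.inv_mk]
        congr 1
        rw [hxval]
        simp [FreeGroup.invRev]
      calc g = FreeGroup.mk g.toWord := hgM
        _ = FreeGroup.mk ([y0] ++ (mid ++ [x])) := by rw [hMdecomp]; rfl
        _ = FreeGroup.mk [y0] * FreeGroup.mk mid * FreeGroup.mk [x] := by
            rw [FreeGroup.mul_mk, FreeGroup.mul_mk]; congr 1
        _ = FreeGroup.mk [y0] * (b * FreeGroup.mk L * b⁻¹) * (FreeGroup.mk [y0])⁻¹ := by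
            rw [hL3, hinv]
        _ = (FreeGroup.mk [y0] * b) * FreeGroup.mk L * (FreeGroup.mk [y0] * b)⁻¹ := by
            group

lemma exists_decomp (g : FreeGroup α) (hg : g ≠ 1) :
    ∃ (a : FreeGroup α) (L : List (α × Bool)), CycRed L ∧ L ≠ [] ∧
      g = a * FreeGroup.mk L * a⁻¹ :=
  exists_decomp_aux (FreeGroup.norm g) g rfl hg

end CPF

lemma CPF.pow_ne_one' {α : Type*} [DecidableEq α] (g : FreeGroup α) (hg : g ≠ 1)
    (n : ℕ) (hn : n ≠ 0) : g ^ n ≠ 1 := by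
  obtain ⟨a, L, hcr, hLne, rfl⟩ := CPF.exists_decomp g hg
  intro h1
  have hconj : ∀ k : ℕ, (a * FreeGroup.mk L * a⁻¹) ^ k = a * (FreeGroup.mk L) ^ k * a⁻¹ := by
    intro k
    induction k with
    | zero => group
    | succ m ihm => rw [pow_succ, pow_succ, ihm]; group
  have h2 : (FreeGroup.mk L) ^ n = 1 := by
    rw [hconj n] at h1
    have := congrArg (fun z => a⁻¹ * z * a) h1
    simpa [mul_assoc] using this
  have h3 := CPF.norm_mk_pow hcr hLne n
  rw [h2, FreeGroup.norm_one] at h3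
  have hl : L.length ≠ 0 := fun h => hLne (List.length_eq_zero_iff.mp h)
  exact (Nat.mul_ne_zero hn hl) h3.symm

lemma CPF.zpow_ne_one {α : Type*} (g : FreeGroup α) (hg : g ≠ 1)
    (n : ℤ) (hn : n ≠ 0) : g ^ n ≠ 1 := by
  classical
  intro h1
  apply CPF.pow_ne_one' g hg n.natAbs (by omega)
  rcases Int.natAbs_eq n with he | he
  · rw [← zpow_natCast, ← he, h1]
  · rw [← zpow_natCast]
    have : (n.natAbs : ℤ) = -n := by omega
    rw [this, zpow_neg, h1, inv_one]


namespace CPF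

lemma of_mul_of_ne {β : Type*} {a b : β} (hab : a ≠ b) :
    FreeGroup.of a * FreeGroup.of b ≠ FreeGroup.of b * FreeGroup.of a := by
  classical
  intro h
  have key : ∀ (c d : β), (FreeGroup.of c * FreeGroup.of d).toWord = [(c,true),(d,true)] := by
    intro c d
    have h2 : FreeGroup.of c * FreeGroup.of d = FreeGroup.mk [(c,true),(d,true)] := by
      rw [show FreeGroup.of c = FreeGroup.mk [(c,true)] from rfl,
          show FreeGroup.of d = FreeGroup.mk [(d,true)] from rfl, FreeGroup.mul_mk]
      rfl
    rw [h2, FreeGroup.toWord_mk]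
    apply reduce_eq_self_of_chain'
    refine List.isChain_cons_cons.mpr ⟨?_, List.isChain_singleton _⟩
    intro hc
    have := congrArg Prod.snd hc
    simp at this
  have := congrArg FreeGroup.toWord h
  rw [key a b, key b a] at this
  injection this with h1 _
  exact hab (congrArg Prod.fst h1)

lemma subsingleton_of_comm {β : Type*}
    (hcomm : ∀ x y : FreeGroup β, x * y = y * x) : Subsingleton β := by
  refine ⟨fun a b => ?_⟩
  by_contra hab
  exact of_mul_of_ne hab (hcomm _ _)

lemma isCyclic_freeGroup_of_subsingleton {β : Type*} [Subsingleton β] :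
    IsCyclic (FreeGroup β) := by
  rcases isEmpty_or_nonempty β with hβ | hβ
  · have htriv : ∀ x : FreeGroup β, x = 1 := by
      intro x
      classical
      rw [← FreeGroup.mk_toWord (x := x)]
      rcases hL : x.toWord with _ | ⟨⟨a, c⟩, t⟩
      · rfl
      · exact isEmptyElim a
    refine ⟨⟨1, fun x => ?_⟩⟩
    rw [htriv x]
    exact Subgroup.one_mem (Subgroup.zpowers (1 : FreeGroup β))
  · obtain ⟨b⟩ := hβ
    refine ⟨⟨FreeGroup.of b, fun x => ?_⟩⟩
    refine FreeGroup.induction_on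
      (C := fun g => g ∈ Subgroup.zpowers (FreeGroup.of b)) x
      (Subgroup.one_mem _) (fun c => ?_) (fun c hc => inv_mem hc)
      (fun c d hc hd => mul_mem hc hd)
    rw [Subsingleton.elim c b]
    exact Subgroup.mem_zpowers _

lemma isCyclic_of_isFreeGroup_comm (G : Type*) [Group G] [IsFreeGroup G]
    (hcomm : ∀ x y : G, x * y = y * x) : IsCyclic G := by
  let e := IsFreeGroup.toFreeGroup (G := G)
  have hcomm' : ∀ x y : FreeGroup (IsFreeGroup.Generators G), x * y = y * x := by
    intro x y
    apply e.symm.injective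
    rw [map_mul, map_mul]
    exact hcomm _ _
  have h1 : Subsingleton (IsFreeGroup.Generators G) := subsingleton_of_comm hcomm'
  have h2 : IsCyclic (FreeGroup (IsFreeGroup.Generators G)) :=
    isCyclic_freeGroup_of_subsingleton
  exact isCyclic_of_surjective e.symm.toMonoidHom e.symm.surjective

lemma exists_common_zpowers {β : Type*} (x y : FreeGroup β) (hxy : x * y = y * x) :
    ∃ z : FreeGroup β, x ∈ Subgroup.zpowers z ∧ y ∈ Subgroup.zpowers z := by
  set H := Subgroup.closure ({x, y} : Set (FreeGroup β)) with hH
  have hpair : ∀ a ∈ ({x, y} : Set (FreeGroup β)), ∀ b ∈ ({x, y} : Set (FreeGroup β)),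
      a * b = b * a := by
    rintro a (rfl | rfl) b (rfl | rfl) <;> first | rfl | exact hxy | exact hxy.symm
  have hcomm : ∀ g h : H, g * h = h * g := by
    rintro ⟨g, hg⟩ ⟨h', hh⟩
    apply Subtype.ext
    show g * h' = h' * g
    refine Subgroup.closure_induction₂
      (fun a b ha hb => hpair a ha b hb) ?_ ?_ ?_ ?_ ?_ ?_ hg hh
    · intro a _; rw [one_mul, mul_one]
    · intro a _; rw [one_mul, mul_one]
    · intro a b c _ _ _ h1 h2; rw [mul_assoc, h2, ← mul_assoc, h1, mul_assoc]
    · intro a b c _ _ _ h1 h2; rw [← mul_assoc, h1, mul_assoc, h2, ← mul_assoc]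
    · intro a b _ _ h1
      exact (Commute.inv_left h1).eq
    · intro a b _ _ h1
      exact (Commute.inv_right h1).eq
  have hcyc : IsCyclic H := isCyclic_of_isFreeGroup_comm H hcomm
  obtain ⟨⟨z, hzH⟩, hz⟩ := hcyc.exists_generator
  have hmem : ∀ g : FreeGroup β, g ∈ H → g ∈ Subgroup.zpowers z := by
    intro g hg
    obtain ⟨k, hk⟩ := hz ⟨g, hg⟩
    exact ⟨k, by simpa using congrArg Subtype.val hk⟩
  exact ⟨z, hmem x (Subgroup.subset_closure (by simp)),
    hmem y (Subgroup.subset_closure (by simp))⟩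

/-- the exponent-sum homomorphism at a letter -/
noncomputable def expSum {β : Type*} (a : β) : FreeGroup β →* Multiplicative ℤ := by
  classical
  exact FreeGroup.lift (fun c => if c = a then Multiplicative.ofAdd (1 : ℤ) else 1)

lemma expSum_zpow {β : Type*} (a : β) (z : FreeGroup β) (m : ℤ) :
    (expSum a (z ^ m)).toAdd = m * (expSum a z).toAdd := by
  rw [map_zpow]
  simp [toAdd_zpow]

lemma eq_one_or_neg_one_of_zpow_eq_of {β : Type*} {z : FreeGroup β} {m : ℤ} {a : β}
    (h : z ^ m = FreeGroup.of a) : m = 1 ∨ m = -1 := by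
  classical
  have h1 : (expSum a (z ^ m)).toAdd = 1 := by
    rw [h]
    simp [expSum, FreeGroup.lift_apply_of]
  rw [expSum_zpow] at h1
  rcases Int.isUnit_iff.mp (IsUnit.of_mul_eq_one _ h1) with h2 | h2 <;> [left; right] <;>
    exact h2

lemma eq_one_of_mem_zpowers_of_of {β : Type*} {g : FreeGroup β} {a b : β} (hab : a ≠ b)
    (ha : g ∈ Subgroup.zpowers (FreeGroup.of a)) (hb : g ∈ Subgroup.zpowers (FreeGroup.of b)) :
    g = 1 := by
  classical
  obtain ⟨s, hs⟩ := ha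
  obtain ⟨t, ht⟩ := hb
  have h1 : (expSum a g).toAdd = s := by
    rw [← hs, expSum_zpow]
    simp [expSum, FreeGroup.lift_apply_of]
  have h2 : (expSum a g).toAdd = 0 := by
    rw [← ht, expSum_zpow]
    simp [expSum, FreeGroup.lift_apply_of, if_neg hab.symm]
  rw [h1] at h2
  rw [← hs, h2]
  simp

end CPF

namespace CPF

lemma subsingleton_of_central {β : Type*} (g : FreeGroup β) (hg : g ≠ 1)
    (hc : ∀ x : FreeGroup β, g * x = x * g) : Subsingleton β := by
  refine ⟨fun a b => ?_⟩
  by_contra hab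
  have key : ∀ c : β, g ∈ Subgroup.zpowers (FreeGroup.of c) := by
    intro c
    obtain ⟨z, hgz, hcz⟩ := exists_common_zpowers g (FreeGroup.of c) (hc _)
    obtain ⟨m, hm⟩ := hcz
    obtain ⟨k, hk⟩ := hgz
    rcases eq_one_or_neg_one_of_zpow_eq_of hm with rfl | rfl
    · have hm' : z = FreeGroup.of c := by simpa using hm
      refine ⟨k, ?_⟩
      show (FreeGroup.of c) ^ k = g
      rw [← hm']
      exact hk
    · have hm' : z⁻¹ = FreeGroup.of c := by simpa using hm
      refine ⟨-k, ?_⟩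
      show (FreeGroup.of c) ^ (-k) = g
      rw [← hm', inv_zpow, zpow_neg, inv_inv]
      exact hk
  exact hg (eq_one_of_mem_zpowers_of_of hab (key a) (key b))

lemma centralizer_sub_zpowers {α : Type u_842} (g : FreeGroup α) (hg : g ≠ 1) :
    ∃ z : FreeGroup α, g ∈ Subgroup.zpowers z ∧
      ∀ c : FreeGroup α, c * g = g * c → c ∈ Subgroup.zpowers z := by
  set C := Subgroup.centralizer ({g} : Set (FreeGroup α)) with hC
  have hgC : g ∈ C := by
    rw [hC, Subgroup.mem_centralizer_iff]
    intro h' hh'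
    rw [Set.mem_singleton_iff] at hh'
    subst hh'
    rfl
  have hmemC : ∀ c : FreeGroup α, c * g = g * c → c ∈ C := by
    intro c hcg
    rw [hC, Subgroup.mem_centralizer_iff]
    intro h' hh'
    rw [Set.mem_singleton_iff] at hh'
    subst hh'
    exact hcg.symm
  -- C is free (Nielsen–Schreier) and has nontrivial center, hence cyclic
  let e := IsFreeGroup.toFreeGroup (G := ↥C)
  have hcentral : ∀ x : FreeGroup (IsFreeGroup.Generators ↥C),
      e ⟨g, hgC⟩ * x = x * e ⟨g, hgC⟩ := by
    intro x
    have hcomm : (⟨g, hgC⟩ : ↥C) * e.symm x = e.symm x * ⟨g, hgC⟩ := by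
      apply Subtype.ext
      have hmem := (e.symm x).2
      have h2 : ∀ y ∈ ({g} : Set (FreeGroup α)),
          y * (e.symm x : FreeGroup α) = (e.symm x : FreeGroup α) * y :=
        Subgroup.mem_centralizer_iff.mp hmem
      show g * (e.symm x : FreeGroup α) = (e.symm x : FreeGroup α) * g
      exact h2 g rfl
    have := congrArg e hcomm
    rw [map_mul, map_mul, MulEquiv.apply_symm_apply] at this
    exact this
  have hgne : e ⟨g, hgC⟩ ≠ 1 := by
    intro h1
    have : (⟨g, hgC⟩ : ↥C) = 1 := by
      apply e.injective
      rw [h1, map_one]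
    exact hg (congrArg Subtype.val this)
  haveI hsub : Subsingleton (IsFreeGroup.Generators ↥C) :=
    subsingleton_of_central _ hgne hcentral
  haveI : IsCyclic (FreeGroup (IsFreeGroup.Generators ↥C)) :=
    isCyclic_freeGroup_of_subsingleton
  have hcyc : IsCyclic ↥C :=
    isCyclic_of_surjective e.symm.toMonoidHom e.symm.surjective
  obtain ⟨⟨z, hzC⟩, hzgen⟩ := hcyc.exists_generator
  have hsubz : ∀ c : FreeGroup α, c ∈ C → c ∈ Subgroup.zpowers z := by
    intro c hc
    obtain ⟨k, hk⟩ := hzgen ⟨c, hc⟩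
    refine ⟨k, ?_⟩
    have := congrArg Subtype.val hk
    simpa using this
  exact ⟨z, hsubz g hgC, fun c hcg => hsubz c (hmemC c hcg)⟩

lemma centralizer_sub_zpowers_self {α : Type u_843} (u g : FreeGroup α) (hg : g ≠ 1)
    (hnp : ∀ (v : FreeGroup α) (n : ℤ), u = v ^ n → n = 1 ∨ n = -1)
    (hug : u * g = g * u) :
    ∀ c : FreeGroup α, c * g = g * c → c ∈ Subgroup.zpowers u := by
  obtain ⟨z, _, hc⟩ := centralizer_sub_zpowers g hg
  obtain ⟨m, hm⟩ := hc u hug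
  intro c hcg
  obtain ⟨k, hk⟩ := hc c hcg
  rcases hnp z m hm.symm with rfl | rfl
  · have hm' : z = u := by simpa using hm
    refine ⟨k, ?_⟩
    show u ^ k = c
    rw [← hm']
    exact hk
  · have hm' : z⁻¹ = u := by simpa using hm
    refine ⟨-k, ?_⟩
    show u ^ (-k) = c
    rw [← hm', inv_zpow, zpow_neg, inv_inv]
    exact hk

end CPF

lemma CPF.conj_zpow' {G : Type*} [Group G] (a x : G) (k : ℤ) :
    (a * x * a⁻¹) ^ k = a * x ^ k * a⁻¹ := by
  have := map_zpow (MulAut.conj a) x k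
  simpa [MulAut.conj_apply] using this.symm


/-- If u is a nontrivial non proper power in a free group and w⁻¹ u^p w = u^q with p ≠ 0,
then p = q and w ∈ ⟨u⟩. -/
theorem conj_pow_eq_pow_free {α : Type*} (u : FreeGroup α) (hu : u ≠ 1)
    (hnp : ∀ (v : FreeGroup α) (n : ℤ), u = v ^ n → n = 1 ∨ n = -1)
    (w : FreeGroup α) (p q : ℤ) (hp : p ≠ 0)
    (h : w⁻¹ * u ^ p * w = u ^ q) :
    p = q ∧ w ∈ Subgroup.zpowers u := by
  have hup : u ^ p ≠ 1 := CPF.zpow_ne_one u hu p hp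
  have hcomm_up : u * u ^ p = u ^ p * u := ((Commute.refl u).zpow_right p).eq
  have hcomm_uq : u * u ^ q = u ^ q * u := ((Commute.refl u).zpow_right q).eq
  have hq : u ^ p = w * u ^ q * w⁻¹ := by rw [← h]; group
  have h1 : (w * u * w⁻¹) * u ^ p = u ^ p * (w * u * w⁻¹) := by
    rw [hq]
    calc (w * u * w⁻¹) * (w * u ^ q * w⁻¹) = w * (u * u ^ q) * w⁻¹ := by group
      _ = w * (u ^ q * u) * w⁻¹ := by rw [hcomm_uq]
      _ = (w * u ^ q * w⁻¹) * (w * u * w⁻¹) := by group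
  have hwuw : w * u * w⁻¹ ∈ Subgroup.zpowers u :=
    CPF.centralizer_sub_zpowers_self u (u ^ p) hup hnp hcomm_up _ h1
  obtain ⟨k, hk⟩ := hwuw
  have hk0 : u ^ k = w * u * w⁻¹ := hk
  have hk' : u = (w⁻¹ * u * w) ^ k := by
    rw [show w⁻¹ * u * w = w⁻¹ * u * w⁻¹⁻¹ by rw [inv_inv], CPF.conj_zpow', hk0]
    group
  rcases hnp _ k hk' with hk1 | hk1
  · -- k = 1 : w commutes with u
    rw [hk1, zpow_one] at hk0
    have hwu : w * u = u * w := by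
      have := congrArg (fun z => z * w) hk0
      simpa [mul_assoc] using this.symm
    have hw : w ∈ Subgroup.zpowers u :=
      CPF.centralizer_sub_zpowers_self u u hu hnp rfl w hwu
    obtain ⟨s, hs⟩ := id hw
    have hs0 : u ^ s = w := hs
    have hwp : w * u ^ p = u ^ p * w := by
      rw [← hs0]
      exact ((Commute.refl u).zpow_zpow s p).eq
    have hpq : u ^ p = u ^ q := by
      rw [← h, mul_assoc, ← hwp]
      group
    have : p = q := by
      by_contra hne
      apply CPF.zpow_ne_one u hu (p - q) (by omega)
      rw [zpow_sub, hpq]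
      group
    exact ⟨this, hw⟩
  · -- k = -1 : u is conjugate to its inverse, contradiction
    exfalso
    rw [hk1, zpow_neg_one] at hk0
    -- hk0 : u⁻¹ = w * u * w⁻¹
    have h5 : w⁻¹ * u⁻¹ * w = u := by
      rw [hk0]; group
    have hconj : w⁻¹ * u * w = u⁻¹ := by
      have h7 : (w⁻¹ * u⁻¹ * w)⁻¹ = u⁻¹ := by rw [h5]
      rw [← h7]; group
    have h3 : (w ^ 2)⁻¹ * u * (w ^ 2) = u := by
      rw [pow_two,
        show (w * w)⁻¹ * u * (w * w) = w⁻¹ * (w⁻¹ * u * w) * w by group, hconj]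
      exact h5
    have hw2 : (w ^ 2) * u = u * (w ^ 2) := by
      conv_lhs => rw [← h3]
      group
    have hw2mem : w ^ 2 ∈ Subgroup.zpowers u :=
      CPF.centralizer_sub_zpowers_self u u hu hnp rfl _ hw2
    obtain ⟨s, hs⟩ := hw2mem
    have hs0 : u ^ s = w ^ 2 := hs
    have hconj_s : w⁻¹ * u ^ s * w = u ^ (-s) := by
      rw [show w⁻¹ * u ^ s * w = (w⁻¹ * u * w⁻¹⁻¹) ^ s by rw [CPF.conj_zpow']; group,
        inv_inv, hconj]
      simp [inv_zpow, zpow_neg]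
    have hfix : w⁻¹ * u ^ s * w = u ^ s := by
      rw [hs0]; group
    have hss : u ^ s = u ^ (-s) := by rw [← hfix, hconj_s]
    have hs00 : s = 0 := by
      by_contra hsne
      apply CPF.zpow_ne_one u hu (2 * s) (by omega)
      rw [two_mul, zpow_add]
      nth_rewrite 1 [hss]
      rw [← zpow_add]
      simp
    have hwone : w = 1 := by
      by_contra hwne
      apply CPF.zpow_ne_one w hwne 2 (by omega)
      rw [hs00, zpow_zero] at hs0
      rw [show ((2:ℤ)) = ((2:ℕ) : ℤ) by norm_num, zpow_natCast]
      exact hs0.symm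
    rw [hwone] at hconj
    simp at hconj
    apply CPF.zpow_ne_one u hu 2 (by omega)
    rw [show ((2:ℤ)) = ((2:ℕ) : ℤ) by norm_num, zpow_natCast, pow_two]
    nth_rewrite 2 [hconj]
    simp
end

section
/- Let G be a finitely generated group, n a natural number, and N the intersection of all normal subgroups of G of index at most n. Then N is a fully invariant subgroup of G of finite index. -/
open Subgroup

/-- Homomorphisms from a finitely generated group into a finite monoid form a finite set. -/
lemma finite_monoidHom_of_fg {G P : Type*} [Group G] [Group.FG G] [Monoid P] [Finite P] :
    Finite (G →* P) := by
  obtain ⟨S, hS, hSfin⟩ := Group.fg_iff.mp ‹Group.FG G›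
  haveI : Finite S := hSfin.to_subtype
  apply Finite.of_injective (fun f : G →* P => fun s : S => f s)
  intro f g h
  exact MonoidHom.eq_of_eqOn_dense hS fun x hx => congrFun h ⟨x, hx⟩

/-- A finitely generated group has finitely many subgroups of index at most `n`. -/
lemma finite_subgroups_index_le {G : Type*} [Group G] [Group.FG G] (n : ℕ) :
    Finite {H : Subgroup G | H.index ≠ 0 ∧ H.index ≤ n} := by
  classical
  haveI : Finite ((G →* Equiv.Perm (Fin n)) × Fin n) := by
    haveI : Finite (G →* Equiv.Perm (Fin n)) := finite_monoidHom_of_fg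
    infer_instance
  have hemb : ∀ H : {H : Subgroup G | H.index ≠ 0 ∧ H.index ≤ n},
      Nonempty ((G ⧸ (H : Subgroup G)) ↪ Fin n) := by
    rintro ⟨H, h0, hle⟩
    haveI : H.FiniteIndex := ⟨h0⟩
    haveI : Fintype (G ⧸ H) := Fintype.ofFinite _
    apply Function.Embedding.nonempty_of_card_le
    rw [Fintype.card_fin, ← Nat.card_eq_fintype_card]
    exact le_trans (le_of_eq H.index_eq_card.symm) hle
  set e : ∀ H : {H : Subgroup G | H.index ≠ 0 ∧ H.index ≤ n},
      (G ⧸ (H : Subgroup G)) ↪ Fin n := fun H => Classical.choice (hemb H) with he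
  set F : {H : Subgroup G | H.index ≠ 0 ∧ H.index ≤ n} →
      (G →* Equiv.Perm (Fin n)) × Fin n := fun H =>
    ((Equiv.Perm.viaEmbeddingHom (e H)).comp (MulAction.toPermHom G (G ⧸ (H : Subgroup G))),
      e H ((1 : G) : G ⧸ (H : Subgroup G))) with hF
  have hmem : ∀ (H : {H : Subgroup G | H.index ≠ 0 ∧ H.index ≤ n}) (g : G),
      g ∈ (H : Subgroup G) ↔ (F H).1 g (F H).2 = (F H).2 := by
    intro H g
    have key : (F H).1 g (F H).2 = e H (g • ((1 : G) : G ⧸ (H : Subgroup G))) := by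
      simp only [hF, MonoidHom.comp_apply, Equiv.Perm.viaEmbeddingHom_apply]
      exact Equiv.Perm.viaEmbedding_apply _ _ _
    rw [key]
    constructor
    · intro hg
      have : g • ((1 : G) : G ⧸ (H : Subgroup G)) = ((1 : G) : G ⧸ (H : Subgroup G)) := by
        have := (MulAction.stabilizer_quotient (H : Subgroup G)).symm ▸ hg
        exact this
      rw [this]
    · intro hg
      have : g • ((1 : G) : G ⧸ (H : Subgroup G)) = ((1 : G) : G ⧸ (H : Subgroup G)) :=
        (e H).injective hg
      rw [← MulAction.stabilizer_quotient (H : Subgroup G)]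
      exact this
  apply Finite.of_injective F
  intro H₁ H₂ hEq
  ext g
  rw [hmem H₁ g, hmem H₂ g, hEq]

/-- The intersection of all normal subgroups of index at most n of a finitely generated
group is a fully invariant subgroup of finite index. -/
theorem inf_normal_le_index_fully_invariant {G : Type*} [Group G] [Group.FG G]
    (n : ℕ) (N : Subgroup G)
    (hN : N = ⨅ H ∈ {H : Subgroup G | H.Normal ∧ H.index ≠ 0 ∧ H.index ≤ n}, H) :
    (∀ φ : Monoid.End G, N.map φ ≤ N) ∧ N.FiniteIndex := by
  constructor
  · intro φ
    subst hN
    apply le_iInf₂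
    rintro H ⟨hnorm, h0, hle⟩
    refine Subgroup.map_le_iff_le_comap.mpr ?_
    have hcomap : (H.comap (φ : G →* G)).index ∣ H.index := by
      rw [Subgroup.index_comap (f := (φ : G →* G))]
      exact Subgroup.relIndex_dvd_index_of_normal H _
    refine iInf₂_le (H.comap (φ : G →* G))
      ⟨hnorm.comap _, fun h => h0 (Nat.eq_zero_of_zero_dvd (h ▸ hcomap)), ?_⟩
    exact le_trans (Nat.le_of_dvd (Nat.pos_of_ne_zero h0) hcomap) hle
  · subst hN
    haveI : Finite {H : Subgroup G | H.Normal ∧ H.index ≠ 0 ∧ H.index ≤ n} :=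
      Set.finite_coe_iff.mpr <|
        (Set.finite_coe_iff.mp (finite_subgroups_index_le n)).subset
          fun H hH => ⟨hH.2.1, hH.2.2⟩
    rw [iInf_subtype']
    exact Subgroup.finiteIndex_iInf fun ⟨H, hH⟩ => ⟨hH.2.1⟩
end

section
/- Let F be a free group of finite rank, φ a noninjective endomorphism of F, and H a subgroup of F. If the preimage H·φ⁻¹ is finitely generated, then H·φ⁻¹ has finite index in F. -/
set_option linter.unusedSectionVars false

open FreeGroup

namespace CFI

variable {α : Type*} [DecidableEq α]

/-- A word is reduced if no two adjacent letters cancel. -/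
def IsRed (L : List (α × Bool)) : Prop :=
  L.Chain' (fun p q => ¬(p.1 = q.1 ∧ p.2 = !q.2))

theorem isRed_reduce (L : List (α × Bool)) : IsRed (reduce L) := by
  induction L with
  | nil => exact List.isChain_nil
  | cons x l ih =>
    rw [reduce.cons]
    rcases hr : reduce l with _ | ⟨h, t⟩
    · exact List.isChain_singleton x
    · rw [hr] at ih
      by_cases hb : x.1 = h.1 ∧ x.2 = !h.2
      · simp only [if_pos hb]
        exact ih.tail
      · simp only [if_neg hb]
        exact List.IsChain.cons_cons hb ih

theorem IsRed.reduce_eq {L : List (α × Bool)} (h : IsRed L) : reduce L = L := by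
  induction L with
  | nil => rfl
  | cons x l ih =>
    rw [reduce.cons, ih h.tail]
    rcases l with _ | ⟨h', t⟩
    · rfl
    · have := List.isChain_cons_cons.mp h
      simp only [if_neg this.1]

theorem IsRed.toWord_mk {L : List (α × Bool)} (h : IsRed L) :
    (FreeGroup.mk L).toWord = L := by rw [FreeGroup.toWord_mk, h.reduce_eq]

theorem isRed_toWord (x : FreeGroup α) : IsRed x.toWord := by
  rw [← FreeGroup.reduce_toWord]; exact isRed_reduce _



theorem reduce_append : ∀ (a b : List (α × Bool)), IsRed a → IsRed b →
    ∃ a' c b', a = a' ++ c ∧ b = invRev c ++ b' ∧ reduce (a ++ b) = a' ++ b' := by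
  intro a
  induction a with
  | nil =>
    intro b _ hb
    exact ⟨[], [], b, rfl, by simp [invRev], by rw [List.nil_append, hb.reduce_eq]⟩
  | cons x a ih =>
    intro b hxa hb
    obtain ⟨a', c, b', ha, hbe, hred⟩ := ih b hxa.tail hb
    rcases a' with _ | ⟨h, t⟩
    · rw [List.nil_append] at ha hred
      subst ha
      rcases b' with _ | ⟨h, t⟩
      · refine ⟨[x], a, [], rfl, by simpa using hbe, ?_⟩
        rw [List.cons_append, reduce.cons, hred]
        simp
      · by_cases hxh : x.1 = h.1 ∧ x.2 = !h.2
        · refine ⟨[], x :: a, t, rfl, ?_, ?_⟩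
          · have hh : h = (x.1, !x.2) := by
              obtain ⟨h1, h2⟩ := hxh
              ext
              · exact h1.symm
              · simp [h2, Bool.not_not]
            rw [hbe, hh]
            simp [invRev]
          · rw [List.cons_append, reduce.cons, hred]
            show (if x.1 = h.1 ∧ x.2 = !h.2 then t else x :: h :: t) = [] ++ t
            rw [if_pos hxh, List.nil_append]
        · refine ⟨[x], a, h :: t, rfl, hbe, ?_⟩
          rw [List.cons_append, reduce.cons, hred]
          show (if x.1 = h.1 ∧ x.2 = !h.2 then t else x :: h :: t) = [x] ++ h :: t
          rw [if_neg hxh]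
          rfl
    · have hx : ¬(x.1 = h.1 ∧ x.2 = !h.2) := by
        have := ha ▸ hxa
        exact (List.isChain_cons_cons.mp this).1
      refine ⟨x :: h :: t, c, b', by rw [ha]; rfl, hbe, ?_⟩
      rw [List.cons_append, reduce.cons, hred, List.cons_append]
      show (if x.1 = h.1 ∧ x.2 = !h.2 then t ++ b' else x :: h :: (t ++ b')) = x :: h :: t ++ b'
      rw [if_neg hx]
      rfl

theorem prefix_coset (P : Subgroup (FreeGroup α)) (V : Set (FreeGroup α)) (hV : V ⊆ P)
    (N : ℕ) (hN : ∀ v ∈ V, v.toWord.length ≤ N) :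
    ∀ (l : List (FreeGroup α)), (∀ x ∈ l, x ∈ V) →
      ∀ q r, (l.prod).toWord = q ++ r →
      ∃ t : FreeGroup α, t.toWord.length ≤ N ∧ FreeGroup.mk q * t⁻¹ ∈ P := by
  intro l
  induction l using List.reverseRecOn with
  | nil =>
    intro _ q r h
    rw [List.prod_nil, FreeGroup.toWord_one] at h
    obtain ⟨hq, _⟩ := List.append_eq_nil_iff.mp h.symm
    subst hq
    exact ⟨1, by simp, by simpa [← FreeGroup.one_eq_mk] using P.one_mem⟩
  | append_singleton l v ihl =>
    intro hl q r h
    have hvV : v ∈ V := hl v (by simp)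
    have hlV : ∀ x ∈ l, x ∈ V := fun x hx => hl x (by simp [hx])
    have hW : l.prod ∈ P := Subgroup.list_prod_mem _ fun x hx => hV (hlV x hx)
    obtain ⟨a', c, b', ha, hbe, hred⟩ :=
      reduce_append l.prod.toWord v.toWord (isRed_toWord _) (isRed_toWord _)
    have hprod : (l ++ [v]).prod = FreeGroup.mk (l.prod.toWord ++ v.toWord) := by
      rw [List.prod_append, List.prod_singleton, ← FreeGroup.mul_mk,
        FreeGroup.mk_toWord, FreeGroup.mk_toWord]
    rw [hprod, FreeGroup.toWord_mk, hred] at h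
    rcases List.append_eq_append_iff.mp h with ⟨b₀, hq, hb0⟩ | ⟨a₂, ha2, _⟩
    · -- q = a' ++ b₀
      refine ⟨FreeGroup.mk (invRev c ++ b₀), ?_, ?_⟩
      · calc (FreeGroup.mk (invRev c ++ b₀)).toWord.length
            ≤ (invRev c ++ b₀).length := by
              have := FreeGroup.norm_mk_le (L₁ := invRev c ++ b₀) (α := α)
              simpa [FreeGroup.norm] using this
          _ ≤ v.toWord.length := by
              rw [hbe, hb0]
              simp [invRev_length]
          _ ≤ N := hN v hvV
      · have key : FreeGroup.mk q * (FreeGroup.mk (invRev c ++ b₀))⁻¹ = l.prod := by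
          have e1 : (FreeGroup.mk (invRev c ++ b₀)) = (FreeGroup.mk c)⁻¹ * FreeGroup.mk b₀ := by
            rw [← FreeGroup.mul_mk, FreeGroup.inv_mk]
          have e2 : FreeGroup.mk q = FreeGroup.mk a' * FreeGroup.mk b₀ := by
            rw [hq, FreeGroup.mul_mk]
          have e3 : FreeGroup.mk a' * FreeGroup.mk c = l.prod := by
            rw [FreeGroup.mul_mk, ← ha, FreeGroup.mk_toWord]
          rw [e1, e2, ← e3]
          group
        rw [key]
        exact hW
    · -- q is a prefix of a' : use induction hypothesis
      exact ihl hlV q (a₂ ++ c) (by rw [ha, ha2, List.append_assoc])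

theorem invRev_append (L₁ L₂ : List (α × Bool)) :
    invRev (L₁ ++ L₂) = invRev L₂ ++ invRev L₁ := by
  simp [invRev]

theorem invRev_head? (L : List (α × Bool)) :
    (invRev L).head? = L.getLast?.map (fun p => (p.1, !p.2)) := by
  rcases List.eq_nil_or_concat L with rfl | ⟨l, a, rfl⟩
  · simp [invRev]
  · rw [List.concat_eq_append, invRev_append]
    simp [invRev]

theorem IsRed.invRev {L : List (α × Bool)} (h : IsRed L) : IsRed (FreeGroup.invRev L) := by
  unfold FreeGroup.invRev
  rw [IsRed]; show List.IsChain _ _; rw [List.isChain_reverse, List.isChain_map]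
  refine h.imp ?_
  rintro p q hpq ⟨e1, e2⟩
  simp only [Bool.not_not] at e2
  exact hpq ⟨e1.symm, e2.symm⟩


open Pointwise in
theorem main_index (hcard : ∀ u v w : α × Bool, ∃ x : α × Bool, x ≠ u ∧ x ≠ v ∧ x ≠ w)
    [Finite α]
    (P K : Subgroup (FreeGroup α)) (hKP : K ≤ P) [hKn : K.Normal]
    (k : FreeGroup α) (hkK : k ∈ K) (hk1 : k ≠ 1) (hfg : P.FG) : P.index ≠ 0 := by
  classical
  obtain ⟨S, hSc, hSfin⟩ := (Subgroup.fg_iff P).mp hfg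
  set N : ℕ := hSfin.toFinset.sup (fun v => v.toWord.length) with hN_def
  set V : Set (FreeGroup α) := S ∪ S⁻¹ with hV_def
  have hV : V ⊆ (P : Set (FreeGroup α)) := by
    rintro x (hx | hx)
    · exact hSc ▸ Subgroup.subset_closure hx
    · have : x⁻¹ ∈ P := hSc ▸ Subgroup.subset_closure hx
      simpa using inv_mem this
  have hN : ∀ v ∈ V, v.toWord.length ≤ N := by
    rintro v (hv | hv)
    · exact Finset.le_sup (f := fun v => v.toWord.length) (hSfin.mem_toFinset.mpr hv)
    · have h1 : v.toWord.length = (v⁻¹).toWord.length := by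
        rw [FreeGroup.toWord_inv, invRev_length]
      rw [h1]
      exact Finset.le_sup (f := fun v => v.toWord.length) (hSfin.mem_toFinset.mpr hv)
  have hdecomp : ∀ p ∈ P, ∃ l : List (FreeGroup α), (∀ x ∈ l, x ∈ V) ∧ l.prod = p := by
    intro p hp
    have h1 : p ∈ Submonoid.closure (S ∪ S⁻¹) := by
      rw [← Subgroup.closure_toSubmonoid, Subgroup.mem_toSubmonoid, hSc]
      exact hp
    exact Submonoid.exists_list_of_mem_closure h1
  -- key step : every right coset has a short representative
  have key : ∀ g : FreeGroup α, ∃ s : FreeGroup α, s.toWord.length ≤ N ∧ g * s⁻¹ ∈ P := by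
    intro g
    by_cases hg : g.toWord.length ≤ N
    · exact ⟨g, hg, by simpa using P.one_mem⟩
    · have hgne : g.toWord ≠ [] := by
        intro h
        exact hg (by rw [h]; simp)
      set gw := g.toWord with hgw
      set a : α × Bool := gw.getLast hgne with ha_def
      have hwne : k.toWord ≠ [] := fun h => hk1 (FreeGroup.toWord_eq_nil_iff.mp h)
      set w := k.toWord with hw
      set h0 : α × Bool := w.head hwne with hh0
      set hl : α × Bool := w.getLast hwne with hhl
      obtain ⟨x, hx1, hx2, hx3⟩ := hcard (a.1, !a.2) (h0.1, !h0.2) hl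
      set κw : List (α × Bool) := x :: (w ++ [(x.1, !x.2)]) with hκw_def
      have hprodx : ∀ u v_ : α × Bool, u = x → ¬(u.1 = v_.1 ∧ u.2 = !v_.2) ∨ True := fun _ _ _ => Or.inr trivial
      have hκred : IsRed κw := by
        refine List.IsChain.cons ?_ ?_
        · refine List.IsChain.append (isRed_toWord k) (List.isChain_singleton _) ?_
          intro p hp y hy
          simp only [List.head?_cons, Option.mem_def, Option.some.injEq] at hy
          subst hy
          rw [Option.mem_def, List.getLast?_eq_getLast hwne, Option.some.injEq] at hp
          rintro ⟨e1, e2⟩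
          refine hx3 ?_
          rw [hhl, hp]
          refine Prod.ext e1.symm ?_
          rw [e2]
          simp
        · intro y hy
          rw [Option.mem_def, List.head?_append_of_ne_nil _ hwne,
            List.head?_eq_head hwne, Option.some.injEq] at hy
          rintro ⟨e1, e2⟩
          refine hx2 ?_
          rw [hh0, hy]
          exact Prod.ext e1 e2
      set κ : FreeGroup α := FreeGroup.mk κw with hκ_def
      have hκK : κ ∈ K := by
        have : κ = FreeGroup.mk [x] * k * (FreeGroup.mk [x])⁻¹ := by
          rw [FreeGroup.inv_mk, ← (FreeGroup.mk_toWord (x := k)), FreeGroup.mul_mk,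
            FreeGroup.mul_mk]
          congr 1
          try simp [invRev, hκw_def, hw]
        rw [this]
        exact hKn.conj_mem k hkK (FreeGroup.mk [x])
      have hbig : g * κ * g⁻¹ ∈ P := hKP (hKn.conj_mem κ hκK g)
      have hbigw : (g * κ * g⁻¹).toWord = gw ++ (κw ++ invRev gw) := by
        have e1 : g * κ * g⁻¹ = FreeGroup.mk (gw ++ (κw ++ invRev gw)) := by
          rw [← (FreeGroup.mk_toWord (x := g)), ← hgw, FreeGroup.inv_mk, FreeGroup.mul_mk,
            FreeGroup.mul_mk, List.append_assoc]
        rw [e1, FreeGroup.toWord_mk]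
        refine IsRed.reduce_eq ?_
        refine List.IsChain.append (isRed_toWord g) ?_ ?_
        · refine List.IsChain.append hκred ((isRed_toWord g).invRev) ?_
          intro p hp y hy
          have hple : p = (x.1, !x.2) := by
            have h9 : κw.getLast? = some (x.1, !x.2) := by
              show ((x :: w) ++ [(x.1, !x.2)]).getLast? = _
              exact List.getLast?_concat
            rw [Option.mem_def, h9, Option.some.injEq] at hp
            exact hp.symm
          have hyle : y = (a.1, !a.2) := by
            rw [Option.mem_def, invRev_head?, List.getLast?_eq_getLast hgne] at hy
            simp only [Option.map_some, Option.some.injEq] at hy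
            rw [← hy, ha_def]
          subst hple hyle
          rintro ⟨e1, e2⟩
          simp only [Bool.not_not] at e1 e2
          refine hx1 ?_
          exact Prod.ext e1 (by rw [← e2]; simp)
        · intro p hp y hy
          rw [Option.mem_def, List.getLast?_eq_getLast hgne, Option.some.injEq] at hp
          have hyx : y = x := by
            rw [Option.mem_def] at hy
            have : (κw ++ invRev gw).head? = some x := rfl
            rw [this, Option.some.injEq] at hy
            exact hy.symm
          subst hyx
          rintro ⟨e1, e2⟩
          refine hx1 ?_
          have hap : a = p := by rw [ha_def, hp]
          rw [hap]
          exact Prod.ext e1.symm (by rw [e2]; simp)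
      obtain ⟨l, hlV, hlprod⟩ := hdecomp _ hbig
      obtain ⟨t, htN, htP⟩ := prefix_coset P V hV N hN l hlV gw (κw ++ invRev gw)
        (by rw [hlprod, hbigw])
      exact ⟨t, htN, by rwa [hgw, FreeGroup.mk_toWord] at htP⟩
  -- conclude: finitely many cosets
  have hsurj : Function.Surjective
      (fun s : {l : List (α × Bool) // l.length ≤ N} =>
        (QuotientGroup.mk ((FreeGroup.mk s.1)⁻¹) : FreeGroup α ⧸ P)) := by
    intro y
    obtain ⟨g, rfl⟩ := QuotientGroup.mk_surjective y
    obtain ⟨s, hsN, hsP⟩ := key g⁻¹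
    refine ⟨⟨s.toWord, hsN⟩, ?_⟩
    show (QuotientGroup.mk ((FreeGroup.mk s.toWord)⁻¹) : FreeGroup α ⧸ P) = QuotientGroup.mk g
    rw [FreeGroup.mk_toWord, QuotientGroup.eq, inv_inv]
    simpa using inv_mem hsP
  haveI : Finite {l : List (α × Bool) // l.length ≤ N} :=
    (List.finite_length_le (α × Bool) N).to_subtype
  haveI : Finite (FreeGroup α ⧸ P) := Finite.of_surjective _ hsurj
  exact Subgroup.index_ne_zero_of_finite


theorem exists_ker_elem {n : ℕ} (φ : Monoid.End (FreeGroup (Fin n)))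
    (hφ : ¬ Function.Injective φ) :
    ∃ k : FreeGroup (Fin n), k ≠ 1 ∧
      k ∈ MonoidHom.ker (φ : FreeGroup (Fin n) →* FreeGroup (Fin n)) := by
  obtain ⟨u, v, huv, hne⟩ := Function.not_injective_iff.mp hφ
  refine ⟨u * v⁻¹, ?_, ?_⟩
  · intro h
    exact hne (mul_inv_eq_one.mp h)
  · show φ (u * v⁻¹) = 1
    rw [_root_.map_mul, _root_.map_inv, huv, mul_inv_cancel]

end CFI

/-- For a noninjective endomorphism φ of a finitely generated free group, if H·φ⁻¹ is
finitely generated then it has finite index. -/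
theorem comap_fg_implies_finiteIndex {n : ℕ}
    (φ : Monoid.End (FreeGroup (Fin n)))
    (hφ : ¬ Function.Injective φ)
    (H : Subgroup (FreeGroup (Fin n)))
    (hfg : (H.comap (φ : FreeGroup (Fin n) →* FreeGroup (Fin n))).FG) :
    (H.comap (φ : FreeGroup (Fin n) →* FreeGroup (Fin n))).index ≠ 0 := by
  match n, φ, hφ, H, hfg with
  | 0, φ, hφ, H, hfg =>
    exfalso
    apply hφ
    intro u v _
    have hsub : ∀ z : FreeGroup (Fin 0), z = 1 := by
      intro z
      rw [← FreeGroup.mk_toWord (x := z)]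
      rcases hz : z.toWord with _ | ⟨p, t⟩
      · rw [← FreeGroup.one_eq_mk]
      · exact p.1.elim0
    rw [hsub u, hsub v]
  | 1, φ, hφ, H, hfg =>
    obtain ⟨k, hk1, hkK⟩ := CFI.exists_ker_elem φ hφ
    change φ k = 1 at hkK
    have hz : ∀ g : FreeGroup (Fin 1), ∃ m : ℤ, g = (FreeGroup.of 0) ^ m := by
      intro g
      have h1 : g ∈ Subgroup.zpowers (FreeGroup.of (0 : Fin 1)) := by
        rw [Subgroup.zpowers_eq_closure]
        have hrange : (Set.range (FreeGroup.of : Fin 1 → FreeGroup (Fin 1)))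
            = {FreeGroup.of 0} := by
          ext y
          constructor
          · rintro ⟨i, rfl⟩
            rw [Subsingleton.elim i 0]
            rfl
          · rintro rfl
            exact ⟨0, rfl⟩
        rw [← hrange, FreeGroup.closure_range_of]
        trivial
      obtain ⟨m, hm⟩ := Subgroup.mem_zpowers_iff.mp h1
      exact ⟨m, hm.symm⟩
    have hofne : ∀ t : ℤ, (FreeGroup.of (0 : Fin 1)) ^ t = 1 → t = 0 := by
      intro t ht
      rcases Int.natAbs_eq t with he | he
      · rw [he, zpow_natCast] at ht
        have h3 := FreeGroup.norm_of_pow (0 : Fin 1) t.natAbs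
        rw [ht, FreeGroup.norm_one] at h3
        omega
      · rw [he, zpow_neg, zpow_natCast, inv_eq_one] at ht
        have h3 := FreeGroup.norm_of_pow (0 : Fin 1) t.natAbs
        rw [ht, FreeGroup.norm_one] at h3
        omega
    obtain ⟨j, hj⟩ := hz k
    have hj0 : j ≠ 0 := fun h => hk1 (by rw [hj, h, zpow_zero])
    obtain ⟨m, hm⟩ := hz (φ (FreeGroup.of 0))
    have hφ1 : φ (FreeGroup.of 0) = 1 := by
      have h2 : (φ (FreeGroup.of 0)) ^ j = 1 := by
        rw [← _root_.map_zpow, ← hj, hkK]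
      rw [hm, ← zpow_mul] at h2
      have h4 := hofne _ h2
      have hm0 : m = 0 := by
        rcases mul_eq_zero.mp h4 with h | h
        · exact h
        · exact absurd h hj0
      rw [hm, hm0, zpow_zero]
    have htop : H.comap (φ : FreeGroup (Fin 1) →* FreeGroup (Fin 1)) = ⊤ := by
      rw [eq_top_iff]
      intro g _
      change φ g ∈ H
      obtain ⟨m', hm'⟩ := hz g
      show φ g ∈ H
      rw [hm', _root_.map_zpow, hφ1, one_zpow]
      exact H.one_mem
    rw [htop, Subgroup.index_top]
    exact one_ne_zero
  | (m + 2), φ, hφ, H, hfg =>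
    obtain ⟨k, hk1, hkK⟩ := CFI.exists_ker_elem φ hφ
    have hKP : MonoidHom.ker (φ : FreeGroup (Fin (m + 2)) →* FreeGroup (Fin (m + 2))) ≤
        H.comap (φ : FreeGroup (Fin (m + 2)) →* FreeGroup (Fin (m + 2))) := by
      intro y hy
      change φ y = 1 at hy
      change φ y ∈ H
      show φ y ∈ H
      rw [hy]
      exact H.one_mem
    refine CFI.main_index (hKn := MonoidHom.normal_ker _) ?_ _ _ hKP k hkK hk1 hfg
    intro u v w
    by_contra hcon
    push_neg at hcon
    have hsub : (Finset.univ : Finset (Fin (m + 2) × Bool)) ⊆ {u, v, w} := by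
      intro x _
      simp only [Finset.mem_insert, Finset.mem_singleton]
      rcases eq_or_ne x u with h | h
      · exact Or.inl h
      rcases eq_or_ne x v with h2 | h2
      · exact Or.inr (Or.inl h2)
      exact Or.inr (Or.inr (hcon x h h2))
    have hle := Finset.card_le_card hsub
    have hcard3 : ({u, v, w} : Finset (Fin (m + 2) × Bool)).card ≤ 3 := by
      refine le_trans (Finset.card_insert_le _ _) ?_
      have := Finset.card_insert_le v ({w} : Finset (Fin (m + 2) × Bool))
      simp only [Finset.card_singleton] at this ⊢
      omega
    rw [Finset.card_univ, Fintype.card_prod, Fintype.card_fin, Fintype.card_bool] at hle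
    omega
end

section
/- Let G be a group and φ an endomorphism of G. If there exists a constant C such that every eventually fixed point x satisfies x·φ^C ∈ Fix(φ), then EvFix(φ) equals the join of Ker(φ^C) and Fix(φ), and Fix(φ) is isomorphic to the quotient EvFix(φ)/Ker(φ^C) (noting Ker(φ^C) ∩ EvFix(φ) is normal in EvFix(φ)). -/
/-- If every eventually fixed point reaches Fix(φ) after C steps, then
EvFix(φ) = Ker(φ^C) ⊔ Fix(φ), Ker(φ^C) ∩ EvFix(φ) is normal in EvFix(φ), and
Fix(φ) ≅ EvFix(φ)/Ker(φ^C). -/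
theorem evFix_eq_ker_join_fix {G : Type*} [Group G] (φ : Monoid.End G) (C : ℕ)
    (E Fx : Subgroup G)
    (hE : ∀ x, x ∈ E ↔ ∃ m : ℕ, (φ ^ (m + 1)) x = (φ ^ m) x)
    (hFx : ∀ x, x ∈ Fx ↔ φ x = x)
    (hC : ∀ x, x ∈ E → (φ ^ C) x ∈ Fx) :
    E = MonoidHom.ker (φ ^ C : G →* G) ⊔ Fx ∧
      ∃ hN : ((MonoidHom.ker (φ ^ C : G →* G)).subgroupOf E).Normal,
        letI := hN
        Nonempty ((E ⧸ (MonoidHom.ker (φ ^ C : G →* G)).subgroupOf E) ≃* Fx) := by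
  have hfixpow : ∀ n x, φ x = x → (φ ^ n : Monoid.End G) x = x := by
    intro n x hx
    induction n with
    | zero => rfl
    | succ n ih => rw [pow_succ, Monoid.End.coe_mul, Function.comp_apply, hx, ih]
  have hFxE : Fx ≤ E := by
    intro x hx
    rw [hE]
    exact ⟨0, by simpa using (hFx x).1 hx⟩
  have hkerE : MonoidHom.ker (φ ^ C : G →* G) ≤ E := by
    intro x hx
    rw [hE]
    refine ⟨C, ?_⟩
    have hx' : (φ ^ C : Monoid.End G) x = 1 := hx
    rw [pow_succ', Monoid.End.coe_mul, Function.comp_apply, hx', map_one]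
  have heq : E = MonoidHom.ker (φ ^ C : G →* G) ⊔ Fx := by
    apply le_antisymm
    · intro x hx
      have hy : (φ ^ C : Monoid.End G) x ∈ Fx := hC x hx
      have hyfix : φ ((φ ^ C : Monoid.End G) x) = (φ ^ C : Monoid.End G) x := (hFx _).1 hy
      have hk : x * ((φ ^ C : Monoid.End G) x)⁻¹ ∈ MonoidHom.ker (φ ^ C : G →* G) := by
        have : (φ ^ C : Monoid.End G) ((φ ^ C : Monoid.End G) x) = (φ ^ C : Monoid.End G) x :=
          hfixpow C _ hyfix
        show (φ ^ C : Monoid.End G) (x * ((φ ^ C : Monoid.End G) x)⁻¹) = 1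
        rw [map_mul, map_inv, this, mul_inv_cancel]
      have := mul_mem (Subgroup.mem_sup_left (S := MonoidHom.ker (φ ^ C : G →* G)) (T := Fx) hk)
        (Subgroup.mem_sup_right (S := MonoidHom.ker (φ ^ C : G →* G)) (T := Fx) hy)
      simpa using this
    · exact sup_le hkerE hFxE
  refine ⟨heq, ?_⟩
  -- the homomorphism E → Fx
  let f : E →* Fx :=
    { toFun := fun x => ⟨(φ ^ C : Monoid.End G) x, hC x x.2⟩
      map_one' := by ext; simp
      map_mul' := by intro x y; ext; simp }
  have hker : ((MonoidHom.ker (φ ^ C : G →* G)).subgroupOf E) = MonoidHom.ker f := by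
    ext x
    simp only [f, Subgroup.mem_subgroupOf, MonoidHom.mem_ker, MonoidHom.coe_mk,
      OneHom.coe_mk, Subtype.ext_iff, OneMemClass.coe_one]
    exact Iff.rfl
  have hsurj : Function.Surjective f := by
    intro y
    refine ⟨⟨y, hFxE y.2⟩, ?_⟩
    ext
    exact hfixpow C y ((hFx y).1 y.2)
  rw [hker]
  exact ⟨MonoidHom.normal_ker f, ⟨QuotientGroup.quotientKerEquivOfSurjective f hsurj⟩⟩
end

section
/- Let G be a group, φ an endomorphism of G, and suppose every finite orbit under φ has cardinality at most k. Then for m > k, Ker(φ^m) = Ker(φ^k); i.e., the ascending chain of kernels Ker(φ) ⊆ Ker(φ²) ⊆ … stabilizes at step k. -/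
private lemma ker_aux {G : Type*} [Group G] (φ : Monoid.End G) (x : G) {n j : ℕ}
    (h : (φ ^ n) x = 1) (hnj : n ≤ j) : (φ ^ j) x = 1 := by
  have e : φ ^ (j - n) * φ ^ n = φ ^ j := by
    rw [← pow_add]; congr 1; omega
  calc (φ ^ j) x = (φ ^ (j - n) * φ ^ n) x := by rw [e]
    _ = (φ ^ (j - n)) ((φ ^ n) x) := rfl
    _ = 1 := by rw [h, map_one]

/-- If every finite orbit under φ has at most k elements, then the ascending chain of
kernels stabilizes at step k: Ker(φ^m) = Ker(φ^k) for all m > k. -/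
theorem ker_chain_stabilizes {G : Type*} [Group G] (φ : Monoid.End G) (k : ℕ)
    (hk : ∀ x : G, ({y : G | ∃ j : ℕ, (φ ^ j) x = y}).Finite →
      ({y : G | ∃ j : ℕ, (φ ^ j) x = y}).ncard ≤ k) :
    ∀ m : ℕ, k < m →
      MonoidHom.ker (φ ^ m : G →* G) = MonoidHom.ker (φ ^ k : G →* G) := by
  intro m hm
  ext x
  show (φ ^ m) x = 1 ↔ (φ ^ k) x = 1
  constructor
  · intro hx
    -- orbit is finite
    have hsub : {y : G | ∃ j : ℕ, (φ ^ j) x = y} ⊆ (fun j => (φ ^ j) x) '' (Set.Iic m) := by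
      rintro y ⟨j, rfl⟩
      by_cases hj : j ≤ m
      · exact ⟨j, hj, rfl⟩
      · refine ⟨m, le_refl m, ?_⟩
        simp only
        rw [hx, ker_aux φ x hx (by omega)]
    have horb : ({y : G | ∃ j : ℕ, (φ ^ j) x = y}).Finite :=
      Set.Finite.subset (Set.Finite.image _ (Set.finite_Iic m)) hsub
    by_cases hinj : Set.InjOn (fun j => (φ ^ j) x) (Set.Iic k)
    · exfalso
      have h1 : ((fun j => (φ ^ j) x) '' (Set.Iic k)).ncard = (Set.Iic k : Set ℕ).ncard :=
        Set.ncard_image_of_injOn hinj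
      have h2 : (Set.Iic k : Set ℕ).ncard = k + 1 := by
        rw [Set.ncard_eq_toFinset_card']
        simp
      have h3 : (fun j => (φ ^ j) x) '' (Set.Iic k) ⊆ {y : G | ∃ j : ℕ, (φ ^ j) x = y} := by
        rintro y ⟨j, _, rfl⟩; exact ⟨j, rfl⟩
      have h4 := Set.ncard_le_ncard h3 horb
      have h5 := hk x horb
      omega
    · rw [Set.InjOn] at hinj
      push_neg at hinj
      obtain ⟨i, hi, j, hj, hij, hne⟩ := hinj
      simp only [Set.mem_Iic] at hi hj
      -- wlog i < j
      wlog hlt : i < j generalizing i j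
      · exact this j i hij.symm (Ne.symm hne) hj hi (by omega)
      set p := j - i with hp
      have hp1 : 1 ≤ p := by omega
      have hper : ∀ t : ℕ, (φ ^ (i + t * p)) x = (φ ^ i) x := by
        intro t
        induction t with
        | zero => simp
        | succ t ih =>
          have e : i + (t + 1) * p = p + (i + t * p) := by ring
          rw [e, pow_add]
          calc (φ ^ p * φ ^ (i + t * p)) x = (φ ^ p) ((φ ^ (i + t * p)) x) := rfl
            _ = (φ ^ p) ((φ ^ i) x) := by rw [ih]
            _ = (φ ^ (p + i)) x := by rw [pow_add]; rfl
            _ = (φ ^ j) x := by have e2 : p + i = j := by omega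
                                rw [e2]
            _ = (φ ^ i) x := hij.symm
      have hib : (φ ^ i) x = 1 := by
        rw [← hper m]
        exact ker_aux φ x hx (by nlinarith)
      exact ker_aux φ x hib (by omega)
  · intro hx
    exact ker_aux φ x hx (by omega)
end

section
/- Let φ: F₂ → F₂ be the endomorphism of the free group on {a,b} defined by a ↦ aba and b ↦ 1. Then Fix(φ) is trivial and EvFix(φ) = Ker(φ), which is the (infinitely generated) normal subgroup of words with zero exponent sum in a. -/
namespace Stmt16

open Multiplicative SemidirectProduct

def a : FreeGroup (Fin 2) := FreeGroup.of 0
def b : FreeGroup (Fin 2) := FreeGroup.of 1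

/-- a ↦ aba, b ↦ 1 -/
def φ : Monoid.End (FreeGroup (Fin 2)) :=
  FreeGroup.lift (fun i => if i = 0 then a * b * a else 1)

/-- exponent sum in a, written multiplicatively -/
def lamA : FreeGroup (Fin 2) →* Multiplicative ℤ :=
  FreeGroup.lift (fun i => if i = 0 then Multiplicative.ofAdd (1 : ℤ) else 1)

def c : FreeGroup (Fin 2) := a * b * a

lemma φ_eq : (φ : FreeGroup (Fin 2) →* FreeGroup (Fin 2)) =
    (zpowersHom _ c).comp lamA := by
  apply FreeGroup.ext_hom
  intro i
  fin_cases i <;> simp [φ, lamA, c, zpowersHom_apply]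

lemma φ_apply (x : FreeGroup (Fin 2)) : φ x = c ^ (lamA x).toAdd := by
  have := DFunLike.congr_fun φ_eq x
  refine this.trans ?_
  exact zpowersHom_apply (x := c) (n := lamA x)

lemma lamA_c : lamA c = ofAdd 2 := by
  simp [lamA, c, a, b, ← ofAdd_add]

lemma lamA_φ (x : FreeGroup (Fin 2)) : (lamA (φ x)).toAdd = 2 * (lamA x).toAdd := by
  rw [φ_apply, map_zpow, lamA_c, toAdd_zpow]
  simp [mul_comm]

lemma pow_apply (m : ℕ) (x : FreeGroup (Fin 2)) : (φ ^ (m + 1)) x = (φ ^ m) (φ x) := by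
  rw [pow_succ]; rfl

lemma lamA_pow (m : ℕ) (x : FreeGroup (Fin 2)) :
    (lamA ((φ ^ m) x)).toAdd = 2 ^ m * (lamA x).toAdd := by
  induction m generalizing x with
  | zero => simp
  | succ k ih =>
    rw [pow_apply, ih, lamA_φ]
    ring

lemma part1 (x : FreeGroup (Fin 2)) : φ x = x ↔ x = 1 := by
  constructor
  · intro h
    have h2 := congrArg (fun y => (lamA y).toAdd) h
    simp only [lamA_φ] at h2
    have hn : (lamA x).toAdd = 0 := by omega
    have h3 := φ_apply x
    rw [hn, h] at h3
    simpa using h3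
  · rintro rfl; exact map_one φ

lemma part3 (x : FreeGroup (Fin 2)) : φ x = 1 ↔ lamA x = 1 := by
  constructor
  · intro h
    have h2 := congrArg (fun y => (lamA y).toAdd) h
    simp only [lamA_φ, map_one] at h2
    have hn : (lamA x).toAdd = 0 := by simpa using h2
    have := congrArg Multiplicative.ofAdd hn
    simpa using this
  · intro h
    rw [φ_apply, h]; simp

lemma part2 (x : FreeGroup (Fin 2)) :
    (∃ m : ℕ, (φ ^ (m + 1)) x = (φ ^ m) x) ↔ φ x = 1 := by
  constructor
  · rintro ⟨m, h⟩
    have h2 := congrArg (fun y => (lamA y).toAdd) h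
    simp only [lamA_pow] at h2
    have hp : (2:ℤ) ^ m ≠ 0 := by positivity
    have hz : (2:ℤ)^m * (lamA x).toAdd = 0 := by
      have he : (2:ℤ)^(m+1) = 2 * 2^m := by ring
      rw [he] at h2
      linarith
    have hn : (lamA x).toAdd = 0 := by
      rcases mul_eq_zero.1 hz with h' | h'
      · exact absurd h' hp
      · exact h'
    rw [φ_apply, hn]; simp
  · intro h
    refine ⟨1, ?_⟩
    rw [pow_apply, h, pow_one, h, map_one]

/-! ### The semidirect product `(ℤ →₀ ℤ) ⋊ ℤ` used to show the kernel is not f.g. -/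

abbrev B := Multiplicative (ℤ →₀ ℤ)

def shiftA (n : ℤ) : (ℤ →₀ ℤ) ≃+ (ℤ →₀ ℤ) := Finsupp.domCongr (Equiv.addRight n)

lemma shiftA_apply (n : ℤ) (f : ℤ →₀ ℤ) (k : ℤ) : shiftA n f k = f (k - n) := by
  simp only [shiftA, Finsupp.domCongr_apply, Finsupp.equivMapDomain_apply,
    Equiv.addRight_symm_apply, sub_eq_add_neg]

lemma shiftA_single (n j : ℤ) (v : ℤ) :
    shiftA n (Finsupp.single j v) = Finsupp.single (j + n) v := by
  rw [shiftA]
  rw [Finsupp.domCongr_apply, Finsupp.equivMapDomain_single]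
  rfl

noncomputable def shift : Multiplicative ℤ →* MulAut B :=
  MonoidHom.mk' (fun n => AddEquiv.toMultiplicative (shiftA n.toAdd)) (by
    intro m n
    refine MulEquiv.ext fun f => ?_
    rw [MulAut.mul_apply]
    show ofAdd (shiftA (m * n).toAdd f.toAdd) = ofAdd (shiftA m.toAdd ((shiftA n.toAdd) f.toAdd))
    congr 1
    ext k
    rw [shiftA_apply, shiftA_apply, shiftA_apply]
    congr 1
    simp [sub_sub])

lemma shift_single (n j v : ℤ) :
    shift (ofAdd n) (ofAdd (Finsupp.single j v)) = ofAdd (Finsupp.single (j + n) v) := by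
  show ofAdd (shiftA n (Finsupp.single j v)) = _
  rw [shiftA_single]

noncomputable def ρ : FreeGroup (Fin 2) →* (B ⋊[shift] Multiplicative ℤ) :=
  FreeGroup.lift (fun i => if i = 0 then inr (ofAdd (1:ℤ))
    else inl (ofAdd (Finsupp.single (0:ℤ) (1:ℤ))))

def xk (k : ℤ) : FreeGroup (Fin 2) :=
  (FreeGroup.of 0) ^ k * FreeGroup.of 1 * ((FreeGroup.of 0) ^ k)⁻¹

lemma ρ_a_zpow (k : ℤ) : ρ ((FreeGroup.of (0 : Fin 2)) ^ k) = inr (ofAdd k) := by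
  rw [map_zpow]
  have : ρ (FreeGroup.of (0 : Fin 2)) = inr (ofAdd (1:ℤ)) := by simp [ρ]
  rw [this, ← map_zpow]
  congr 1
  simp [← ofAdd_zsmul]

lemma ρ_xk (k : ℤ) : ρ (xk k) = inl (ofAdd (Finsupp.single k (1:ℤ))) := by
  rw [xk, map_mul, map_mul, map_inv, ρ_a_zpow]
  have hb : ρ (FreeGroup.of (1 : Fin 2)) = inl (ofAdd (Finsupp.single (0:ℤ) (1:ℤ))) := by
    simp [ρ]
  rw [hb, ← map_inv, ← inl_aut, shift_single, zero_add]

lemma rightHom_ρ (x : FreeGroup (Fin 2)) : rightHom (ρ x) = lamA x := by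
  have h : (rightHom : B ⋊[shift] Multiplicative ℤ →* Multiplicative ℤ).comp ρ = lamA := by
    apply FreeGroup.ext_hom
    intro i
    fin_cases i <;> simp [ρ, lamA]
  exact DFunLike.congr_fun h x

lemma lamA_xk (k : ℤ) : lamA (xk k) = 1 := by
  simp [xk, lamA]

lemma xk_mem_ker (k : ℤ) :
    xk k ∈ MonoidHom.ker (φ : FreeGroup (Fin 2) →* FreeGroup (Fin 2)) :=
  MonoidHom.mem_ker.mpr ((part3 _).2 (lamA_xk k))

noncomputable def Lhom :
    MonoidHom.ker (φ : FreeGroup (Fin 2) →* FreeGroup (Fin 2)) →* B where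
  toFun x := (ρ (x : FreeGroup (Fin 2))).left
  map_one' := by
    show (ρ ((1 : _) : FreeGroup (Fin 2))).left = 1
    rw [map_one]
    rfl
  map_mul' x y := by
    have hx : (ρ (x : FreeGroup (Fin 2))).right = 1 := by
      show rightHom (ρ (x : FreeGroup (Fin 2))) = 1
      rw [rightHom_ρ]
      exact (part3 _).1 (MonoidHom.mem_ker.mp x.2)
    show (ρ ((x * y : _) : FreeGroup (Fin 2))).left = _
    rw [Subgroup.coe_mul, map_mul, SemidirectProduct.mul_left, hx, map_one]
    rfl

lemma not_fg_of_singles (H : Subgroup B)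
    (hs : ∀ k : ℤ, ofAdd (Finsupp.single k (1:ℤ)) ∈ H) : ¬ H.FG := by
  rintro ⟨S, hS⟩
  classical
  set T : Finset ℤ := S.sup (fun f => (toAdd f).support) with hT
  have key : ∀ g ∈ Subgroup.closure (S : Set B), (toAdd g).support ⊆ T := by
    intro g hg
    induction hg using Subgroup.closure_induction with
    | mem x hx =>
      exact Finset.le_sup (f := fun f : B => (toAdd f).support) (by exact_mod_cast hx)
    | one => simp
    | mul x y hx hy ihx ihy =>
      calc (toAdd (x * y)).support ⊆ (toAdd x).support ∪ (toAdd y).support := by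
            simpa using Finsupp.support_add (g₁ := toAdd x) (g₂ := toAdd y)
        _ ⊆ T := Finset.union_subset ihx ihy
    | inv x hx ihx => simpa using ihx
  obtain ⟨k, hk⟩ := Infinite.exists_notMem_finset T
  have hmem : ofAdd (Finsupp.single k (1:ℤ)) ∈ Subgroup.closure (S : Set B) := by
    rw [hS]; exact hs k
  have := key _ hmem
  apply hk
  apply this
  simp [Finsupp.support_single_ne_zero k one_ne_zero]

/-- For a ↦ aba, b ↦ 1: Fix(φ) is trivial, EvFix(φ) = Ker(φ) is the normal subgroup of
words with zero exponent sum in a, and it is not finitely generated. -/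
theorem fix_trivial_evFix_eq_ker :
    (∀ x, φ x = x ↔ x = 1) ∧
      (∀ x, (∃ m : ℕ, (φ ^ (m + 1)) x = (φ ^ m) x) ↔ φ x = 1) ∧
      (∀ x, φ x = 1 ↔ lamA x = 1) ∧
      (MonoidHom.ker (φ : FreeGroup (Fin 2) →* FreeGroup (Fin 2))).Normal ∧
      ¬ (MonoidHom.ker (φ : FreeGroup (Fin 2) →* FreeGroup (Fin 2))).FG := by
  refine ⟨part1, part2, part3, MonoidHom.normal_ker _, ?_⟩
  intro hFG
  haveI : Group.FG (MonoidHom.ker (φ : FreeGroup (Fin 2) →* FreeGroup (Fin 2))) :=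
    (Group.fg_iff_subgroup_fg _).2 hFG
  have h3 : (Lhom.range).FG := (Group.fg_iff_subgroup_fg _).1 (Group.fg_range Lhom)
  refine not_fg_of_singles Lhom.range (fun k => ⟨⟨xk k, xk_mem_ker k⟩, ?_⟩) h3
  show (ρ (xk k)).left = _
  rw [ρ_xk]
  rfl

end Stmt16
end
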